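/- Let f solve f' = (1 − φ(f))^{1/2}, f(0) = 0, with φ(x) = (√3/π)∫₀ˣ (arctan u³)/u² du. Then for all r > 0, −f'''(r)/f'(r) − (k−1) f''(r)/f(r) = (√3/(2π)) [ 3/(f(r)⁶ + 1) + (k−3)·(arctan f(r)³)/f(r)³ ], and this expression is strictly positive whenever k ≥ 3. -/

import Mathlib

open Filter Real

/-- φ(x) = (√3/π) ∫₀ˣ (arctan u³)/u² du. -/
noncomputable def phi (x : ℝ) : ℝ :=
  (Real.sqrt 3 / π) * ∫ u in (0:ℝ)..x, Real.arctan (u ^ 3) / u ^ 2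

lemma arctan_nonneg' {t : ℝ} (ht : 0 ≤ t) : 0 ≤ Real.arctan t := by
  simpa [Real.arctan_zero] using Real.arctan_strictMono.monotone ht

lemma arctan_le_self' {t : ℝ} (ht : 0 ≤ t) : Real.arctan t ≤ t := by
  have h := Real.le_tan (arctan_nonneg' ht) (Real.arctan_lt_pi_div_two t)
  rwa [Real.tan_arctan] at h

/-- the integrand is continuous everywhere -/
lemma cont_g : Continuous (fun u : ℝ => Real.arctan (u ^ 3) / u ^ 2) := by
  rw [continuous_iff_continuousAt]
  intro x
  rcases eq_or_ne x 0 with rfl | hx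
  · have hval : Real.arctan ((0:ℝ) ^ 3) / (0:ℝ) ^ 2 = 0 := by norm_num
    rw [ContinuousAt, hval]
    apply squeeze_zero_norm (a := fun u : ℝ => |u|)
    · intro u
      rcases eq_or_ne u 0 with rfl | hu
      · simp
      · have hu2 : (0:ℝ) < u ^ 2 := by positivity
        rw [Real.norm_eq_abs, abs_div, abs_of_pos hu2]
        have habs : |Real.arctan (u ^ 3)| = Real.arctan (|u| ^ 3) := by
          rcases le_or_gt 0 u with h | h
          · rw [abs_of_nonneg h, abs_of_nonneg (arctan_nonneg' (by positivity))]
          · rw [abs_of_neg h]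
            have : u ^ 3 = -((-u) ^ 3) := by ring
            rw [this, Real.arctan_neg, abs_neg,
              abs_of_nonneg (arctan_nonneg' (pow_pos (neg_pos.mpr h) 3).le)]
        rw [habs]
        have hle : Real.arctan (|u| ^ 3) ≤ |u| ^ 3 := arctan_le_self' (pow_nonneg (abs_nonneg u) 3)
        rw [div_le_iff₀ hu2]
        calc Real.arctan (|u| ^ 3) ≤ |u| ^ 3 := hle
          _ = |u| * u ^ 2 := by rw [← sq_abs]; ring
    · simpa using (continuous_abs.tendsto (0:ℝ))
  · have hx2 : x ^ 2 ≠ 0 := pow_ne_zero _ hx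
    exact ((Real.continuous_arctan.comp (continuous_pow 3)).continuousAt).div
      ((continuous_pow 2).continuousAt) hx2

lemma phi_hasDerivAt (x : ℝ) :
    HasDerivAt phi ((Real.sqrt 3 / π) * (Real.arctan (x ^ 3) / x ^ 2)) x := by
  have h := intervalIntegral.integral_hasDerivAt_right
    (cont_g.intervalIntegrable 0 x)
    (cont_g.stronglyMeasurableAtFilter _ _)
    cont_g.continuousAt
  exact h.const_mul (Real.sqrt 3 / π)

/- STATEMENT 5.
For the solution f of f' = (1 − φ(f))^{1/2}, f(0) = 0 (with f > 0 on (0,∞)), one has,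
for every r > 0 and integer k,
  −f'''/f' − (k−1) f''/f = (√3/(2π)) [ 3/(f⁶+1) + (k−3) (arctan f³)/f³ ],
which is strictly positive when k ≥ 3.  (This is Ric(H,H) of the doubly warped product
dr² + f² ds²_{k-1} + (f')² ds²₁, where h = f'.) -/
theorem ricHH_formula_and_positive (k : ℕ) (f : ℝ → ℝ)
    (hf0 : f 0 = 0)
    (hode : ∀ r ∈ Set.Ici (0:ℝ), HasDerivAt f (Real.sqrt (1 - phi (f r))) r)
    (hfpos : ∀ r > (0:ℝ), 0 < f r) (hf'pos : ∀ r > (0:ℝ), 0 < deriv f r) :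
    ∀ r > (0:ℝ),
      (-(iteratedDeriv 3 f r) / deriv f r
          - (k - 1 : ℝ) * (iteratedDeriv 2 f r) / f r
        = (Real.sqrt 3 / (2 * π)) *
            (3 / ((f r) ^ 6 + 1) + (k - 3 : ℝ) * Real.arctan ((f r) ^ 3) / (f r) ^ 3)) ∧
      (3 ≤ k →
        0 < -(iteratedDeriv 3 f r) / deriv f r
            - (k - 1 : ℝ) * (iteratedDeriv 2 f r) / f r) := by
  have hpi : (0:ℝ) < π := Real.pi_pos
  -- first derivative on Ici 0
  have hd1 : ∀ r ≥ (0:ℝ), deriv f r = Real.sqrt (1 - phi (f r)) := fun r hr =>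
    (hode r hr).deriv
  -- second derivative formula
  set F2 : ℝ → ℝ := fun r =>
    -(Real.sqrt 3 / (2 * π)) * (Real.arctan ((f r) ^ 3) / (f r) ^ 2) with hF2
  have hd2 : ∀ r > (0:ℝ), HasDerivAt (deriv f) (F2 r) r := by
    intro r hr
    have hfr : 0 < f r := hfpos r hr
    have hc : 0 < deriv f r := hf'pos r hr
    have hcs : deriv f r = Real.sqrt (1 - phi (f r)) := hd1 r hr.le
    have hs : 0 < 1 - phi (f r) := by
      rw [hcs] at hc; exact Real.sqrt_pos.mp hc
    have hf' : HasDerivAt f (deriv f r) r := by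
      rw [hcs]; exact hode r hr.le
    have hphi := (phi_hasDerivAt (f r)).comp r hf'
    have hsub : HasDerivAt (fun t => 1 - phi (f t))
        (-(Real.sqrt 3 / π * (Real.arctan (f r ^ 3) / f r ^ 2) * deriv f r)) r := by
      exact ((hasDerivAt_const r (1:ℝ)).sub hphi).congr_deriv (by ring)
    have hsqrt := (Real.hasDerivAt_sqrt hs.ne').comp r hsub
    have heq : (fun t => Real.sqrt (1 - phi (f t))) =ᶠ[nhds r] deriv f := by
      filter_upwards [Ioi_mem_nhds hr] with t ht
      exact (hd1 t (le_of_lt ht)).symm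
    have hfin := hsqrt.congr_of_eventuallyEq heq.symm
    refine hfin.congr_deriv ?_
    rw [hF2]
    have hss : Real.sqrt (1 - phi (f r)) = deriv f r := hcs.symm
    field_simp [hss]
    rw [hss]
  -- value of deriv (deriv f)
  have hd2v : ∀ r > (0:ℝ), deriv (deriv f) r = F2 r := fun r hr => (hd2 r hr).deriv
  intro r hr
  have hfr : 0 < f r := hfpos r hr
  have hc : 0 < deriv f r := hf'pos r hr
  -- third derivative
  have hf' : HasDerivAt f (deriv f r) r := by
    rw [hd1 r hr.le]; exact hode r hr.le
  set a := f r with ha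
  set c := deriv f r with hcdef
  have hpow3 : HasDerivAt (fun t => (f t) ^ 3) (3 * a ^ 2 * c) r := by
    exact (hf'.pow 3).congr_deriv (by norm_num [← ha])
  have hpow2 : HasDerivAt (fun t => (f t) ^ 2) (2 * a * c) r := by
    exact (hf'.pow 2).congr_deriv (by norm_num [← ha])
  have harctan := (Real.hasDerivAt_arctan (a ^ 3)).comp r hpow3
  have hdiv : HasDerivAt (fun t => Real.arctan ((f t) ^ 3) / (f t) ^ 2)
      ((1 / (1 + (a ^ 3) ^ 2) * (3 * a ^ 2 * c) * a ^ 2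
        - Real.arctan (a ^ 3) * (2 * a * c)) / (a ^ 2) ^ 2) r :=
    harctan.div hpow2 (by positivity)
  have hF2d := hdiv.const_mul (-(Real.sqrt 3 / (2 * π)))
  have heq2 : F2 =ᶠ[nhds r] deriv (deriv f) := by
    filter_upwards [Ioi_mem_nhds hr] with t ht
    exact (hd2v t ht).symm
  have hd3 : deriv (deriv (deriv f)) r
      = -(Real.sqrt 3 / (2 * π)) * ((1 / (1 + (a ^ 3) ^ 2) * (3 * a ^ 2 * c) * a ^ 2
        - Real.arctan (a ^ 3) * (2 * a * c)) / (a ^ 2) ^ 2) :=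
    ((hF2d.congr_of_eventuallyEq heq2.symm)).deriv
  have hi2 : iteratedDeriv 2 f r = F2 r := by
    rw [show (2:ℕ) = 1 + 1 from rfl, iteratedDeriv_succ, iteratedDeriv_one]
    exact hd2v r hr
  have hi3 : iteratedDeriv 3 f r
      = -(Real.sqrt 3 / (2 * π)) * ((1 / (1 + (a ^ 3) ^ 2) * (3 * a ^ 2 * c) * a ^ 2
        - Real.arctan (a ^ 3) * (2 * a * c)) / (a ^ 2) ^ 2) := by
    rw [iteratedDeriv_succ, iteratedDeriv_succ, iteratedDeriv_one]
    exact hd3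
  have key : -(iteratedDeriv 3 f r) / deriv f r
          - (k - 1 : ℝ) * (iteratedDeriv 2 f r) / f r
        = (Real.sqrt 3 / (2 * π)) *
            (3 / ((f r) ^ 6 + 1) + (k - 3 : ℝ) * Real.arctan ((f r) ^ 3) / (f r) ^ 3) := by
    rw [hi2, hi3, hF2]
    beta_reduce
    rw [← ha, ← hcdef]
    have h6 : (0:ℝ) < 1 + (a ^ 3) ^ 2 := by positivity
    field_simp
    ring
  refine ⟨key, fun hk => ?_⟩
  rw [key]
  have hk3 : (0:ℝ) ≤ (k:ℝ) - 3 := by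
    have : (3:ℝ) ≤ (k:ℝ) := by exact_mod_cast hk
    linarith
  have hterm1 : (0:ℝ) < 3 / ((f r) ^ 6 + 1) := by positivity
  have hterm2 : (0:ℝ) ≤ (k - 3 : ℝ) * Real.arctan ((f r) ^ 3) / (f r) ^ 3 := by
    apply div_nonneg _ (by positivity)
    exact mul_nonneg hk3 (arctan_nonneg' (by positivity))
  have hco : (0:ℝ) < Real.sqrt 3 / (2 * π) := by positivity
  exact mul_pos hco (by linarith)
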